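/- Let H be an hfd line set in PG(5,K) and let G₁, G₂ ∈ H be distinct coplanar lines, i.e. G₁ ≠ G₂ and dim(G₁ + G₂) = 3. Then the plane G₁ + G₂ is external to the Klein quadric H₅. -/

import Mathlib

/-- The Klein quadratic form on `K^6`. -/
def kleinQ {K : Type*} [Field K] (x : Fin 6 → K) : K :=
  x 0 * x 1 + x 2 * x 3 + x 4 * x 5

/-- The polar bilinear form `B(x,y) = Q(x+y) - Q(x) - Q(y)`. -/
def kleinB {K : Type*} [Field K] (x y : Fin 6 → K) : K :=
  kleinQ (x + y) - kleinQ x - kleinQ y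

/-- The polar subspace `π₅(S)` of a subspace `S`. -/
def kleinPolar {K : Type*} [Field K] (S : Submodule K (Fin 6 → K)) :
    Submodule K (Fin 6 → K) where
  carrier := {y | ∀ s ∈ S, kleinB s y = 0}
  add_mem' := by
    intro a b ha hb s hs
    have h1 := ha s hs
    have h2 := hb s hs
    simp only [kleinB, kleinQ, Pi.add_apply] at *
    linear_combination h1 + h2
  zero_mem' := by
    intro s hs
    simp [kleinB, kleinQ]
  smul_mem' := by
    intro c a ha s hs
    have h1 := ha s hs
    simp only [kleinB, kleinQ, Pi.add_apply, Pi.smul_apply, smul_eq_mul] at *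
    linear_combination c * h1

/-- `τ` is a tangent hyperplane of the Klein quadric. -/
def IsTangentHyperplane {K : Type*} [Field K] (τ : Submodule K (Fin 6 → K)) : Prop :=
  ∃ x : Fin 6 → K, x ≠ 0 ∧ kleinQ x = 0 ∧ τ = kleinPolar (Submodule.span K {x})

/-- A subspace is external to the Klein quadric. -/
def IsExternal {K : Type*} [Field K] (S : Submodule K (Fin 6 → K)) : Prop :=
  ∀ s ∈ S, s ≠ 0 → kleinQ s ≠ 0

/-- A `0`-secant of the Klein quadric: an external line. -/
def IsSecant {K : Type*} [Field K] (G : Submodule K (Fin 6 → K)) : Prop :=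
  Module.finrank K G = 2 ∧ IsExternal G

/-- The pencil of lines with vertex `v` and carrier plane `κ`. -/
def pencil {K : Type*} [Field K] (v κ : Submodule K (Fin 6 → K)) :
    Set (Submodule K (Fin 6 → K)) :=
  {X | Module.finrank K X = 2 ∧ v ≤ X ∧ X ≤ κ}

/-- An hfd line set: a set of `0`-secants such that every tangent hyperplane
contains exactly one member. -/
def IsHfd {K : Type*} [Field K] (H : Set (Submodule K (Fin 6 → K))) : Prop :=
  (∀ G ∈ H, IsSecant G) ∧
    ∀ τ : Submodule K (Fin 6 → K), IsTangentHyperplane τ → ∃! G, G ∈ H ∧ G ≤ τ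

/-- A pencilled hfd line set: every member lies in a pencil entirely contained in `H`. -/
def IsPencilledHfd {K : Type*} [Field K] (H : Set (Submodule K (Fin 6 → K))) : Prop :=
  IsHfd H ∧
    ∀ G ∈ H, ∃ v κ : Submodule K (Fin 6 → K), Module.finrank K v = 1 ∧
      Module.finrank K κ = 3 ∧ v ≤ κ ∧ pencil v κ ⊆ H ∧ G ∈ pencil v κ

/-- `v` is a vertex of the pencilled hfd line set `H`. -/
def IsVertex {K : Type*} [Field K] (H : Set (Submodule K (Fin 6 → K)))
    (v : Submodule K (Fin 6 → K)) : Prop :=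
  Module.finrank K v = 1 ∧ ∃ κ : Submodule K (Fin 6 → K),
    Module.finrank K κ = 3 ∧ v ≤ κ ∧ pencil v κ ⊆ H

/-- `κ` is a carrier plane of the pencilled hfd line set `H`. -/
def IsCarrier {K : Type*} [Field K] (H : Set (Submodule K (Fin 6 → K)))
    (κ : Submodule K (Fin 6 → K)) : Prop :=
  Module.finrank K κ = 3 ∧ ∃ v : Submodule K (Fin 6 → K),
    Module.finrank K v = 1 ∧ v ≤ κ ∧ pencil v κ ⊆ H

section KleinAux

variable {K : Type*} [Field K]

lemma kleinB_expand (x y : Fin 6 → K) :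
    kleinB x y = x 0 * y 1 + x 1 * y 0 + x 2 * y 3 + x 3 * y 2 + x 4 * y 5 + x 5 * y 4 := by
  simp only [kleinB, kleinQ, Pi.add_apply]; ring

lemma kleinB_symm (x y : Fin 6 → K) : kleinB x y = kleinB y x := by
  simp only [kleinB_expand]; ring

lemma kleinB_self (x : Fin 6 → K) : kleinB x x = 2 * kleinQ x := by
  simp only [kleinB_expand, kleinQ]; ring

lemma kleinQ_add_smul (x y : Fin 6 → K) (c : K) :
    kleinQ (x + c • y) = kleinQ x + c * kleinB y x + c ^ 2 * kleinQ y := by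
  simp only [kleinB_expand, kleinQ, Pi.add_apply, Pi.smul_apply, smul_eq_mul]; ring

lemma kleinB_smul_left (c : K) (x y : Fin 6 → K) :
    kleinB (c • x) y = c * kleinB x y := by
  simp only [kleinB_expand, Pi.smul_apply, smul_eq_mul]; ring

lemma kleinB_add_smul_left (x z y : Fin 6 → K) (c : K) :
    kleinB (x + c • z) y = kleinB x y + c * kleinB z y := by
  simp only [kleinB_expand, Pi.add_apply, Pi.smul_apply, smul_eq_mul]; ring

/-- The polar form as a family of linear functionals. -/
def kBL (x : Fin 6 → K) : (Fin 6 → K) →ₗ[K] K where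
  toFun y := kleinB x y
  map_add' a b := by simp only [kleinB_expand, Pi.add_apply]; ring
  map_smul' c a := by simp only [kleinB_expand, Pi.smul_apply, smul_eq_mul,
    RingHom.id_apply]; ring

@[simp] lemma kBL_apply (x y : Fin 6 → K) : kBL x y = kleinB x y := rfl

lemma mem_kleinPolar {S : Submodule K (Fin 6 → K)} {y : Fin 6 → K} :
    y ∈ kleinPolar S ↔ ∀ s ∈ S, kleinB s y = 0 := Iff.rfl

lemma finrank_V6 : Module.finrank K (Fin 6 → K) = 6 := by
  simp [Module.finrank_pi]

lemma finrank_ker_ge (g : (Fin 6 → K) →ₗ[K] K) :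
    5 ≤ Module.finrank K (LinearMap.ker g) := by
  have h := LinearMap.finrank_range_add_finrank_ker g
  have h2 : Module.finrank K (LinearMap.range g) ≤ 1 := by
    simpa using Submodule.finrank_le (LinearMap.range g)
  rw [finrank_V6] at h
  omega

lemma finrank_inf_ge (A B N : Submodule K (Fin 6 → K)) (hA : A ≤ N) (hB : B ≤ N) :
    Module.finrank K A + Module.finrank K B
      ≤ Module.finrank K (A ⊓ B : Submodule K (Fin 6 → K)) + Module.finrank K N := by
  have h := Submodule.finrank_sup_add_finrank_inf_eq A B
  have h2 : Module.finrank K (A ⊔ B : Submodule K (Fin 6 → K)) ≤ Module.finrank K N :=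
    Submodule.finrank_mono (sup_le hA hB)
  omega

lemma finrank_inf_ker_ge (A : Submodule K (Fin 6 → K)) (g : (Fin 6 → K) →ₗ[K] K) :
    Module.finrank K A
      ≤ Module.finrank K (A ⊓ LinearMap.ker g : Submodule K (Fin 6 → K)) + 1 := by
  have h := finrank_inf_ge A (LinearMap.ker g) ⊤ le_top le_top
  have h2 := finrank_ker_ge g
  have h3 : Module.finrank K (⊤ : Submodule K (Fin 6 → K)) = 6 := by
    rw [finrank_top, finrank_V6]
  omega

/-- Every nonzero isotropic vector lies in a totally isotropic subspace of
dimension at least 3. -/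
lemma exists_totally_isotropic (s : Fin 6 → K) (hs0 : s ≠ 0) (hQs : kleinQ s = 0) :
    ∃ T : Submodule K (Fin 6 → K), s ∈ T ∧ 3 ≤ Module.finrank K T ∧
      ∀ t ∈ T, kleinQ t = 0 := by
  classical
  set f : (Fin 6 → K) →ₗ[K] K :=
    s 1 • LinearMap.proj 0 + s 3 • LinearMap.proj 2 + s 5 • LinearMap.proj 4 with hf
  have hf_apply : ∀ x : Fin 6 → K, f x = s 1 * x 0 + s 3 * x 2 + s 5 * x 4 := by
    intro x; simp [hf]
  set U0 : Submodule K (Fin 6 → K) :=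
    LinearMap.ker (LinearMap.proj (R := K) (φ := fun _ : Fin 6 => K) 1) ⊓
    LinearMap.ker (LinearMap.proj 3) ⊓ LinearMap.ker (LinearMap.proj 5) with hU0
  have hU0_mem : ∀ x : Fin 6 → K, x ∈ U0 ↔ x 1 = 0 ∧ x 3 = 0 ∧ x 5 = 0 := by
    intro x
    simp [hU0, Submodule.mem_inf, LinearMap.mem_ker, and_assoc]
  -- a 3-dimensional subspace inside U0
  have hU0_rank : 3 ≤ Module.finrank K U0 := by
    set φ : (Fin 3 → K) →ₗ[K] (Fin 6 → K) :=
      { toFun := fun a j => if j = 0 then a 0 else if j = 2 then a 1 else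
          if j = 4 then a 2 else 0
        map_add' := by intro a b; funext j; by_cases h0 : j = 0 <;>
          by_cases h2 : j = 2 <;> by_cases h4 : j = 4 <;> simp [h0, h2, h4]
        map_smul' := by intro c a; funext j; by_cases h0 : j = 0 <;>
          by_cases h2 : j = 2 <;> by_cases h4 : j = 4 <;> simp [h0, h2, h4] } with hφ
    have hφ_apply : ∀ (a : Fin 3 → K) (j : Fin 6), φ a j = if j = 0 then a 0 else
        if j = 2 then a 1 else if j = 4 then a 2 else 0 := fun a j => rfl
    have hinj : Function.Injective φ := by
      intro a b hab
      funext i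
      fin_cases i
      · have := congrFun hab 0; simpa [hφ_apply] using this
      · have := congrFun hab 2; simpa [hφ_apply] using this
      · have := congrFun hab 4; simpa [hφ_apply] using this
    have hrange : LinearMap.range φ ≤ U0 := by
      rintro _ ⟨a, rfl⟩
      rw [hU0_mem]
      refine ⟨?_, ?_, ?_⟩ <;> simp [hφ_apply]
    have h1 : Module.finrank K (LinearMap.range φ) = 3 := by
      have h := LinearMap.finrank_range_add_finrank_ker φ
      rw [LinearMap.ker_eq_bot.mpr hinj] at h
      simp only [finrank_bot, add_zero] at h
      rw [h]
      simp [Module.finrank_pi]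
    calc (3 : ℕ) = Module.finrank K (LinearMap.range φ) := h1.symm
      _ ≤ Module.finrank K U0 := Submodule.finrank_mono hrange
  set W : Submodule K (Fin 6 → K) := U0 ⊓ LinearMap.ker f with hW
  refine ⟨Submodule.span K {s} ⊔ W, ?_, ?_, ?_⟩
  · exact Submodule.mem_sup_left (Submodule.mem_span_singleton_self s)
  · -- rank at least 3
    by_cases hcase : s 1 = 0 ∧ s 3 = 0 ∧ s 5 = 0
    · have hWU0 : W = U0 := by
        rw [hW]
        refine inf_eq_left.mpr ?_
        intro x _
        rw [LinearMap.mem_ker, hf_apply, hcase.1, hcase.2.1, hcase.2.2]; ring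
      have : U0 ≤ Submodule.span K {s} ⊔ W := hWU0 ▸ le_sup_right
      exact le_trans hU0_rank (Submodule.finrank_mono this)
    · have hsU0 : s ∉ U0 := fun h => hcase ((hU0_mem s).mp h)
      have hWrank : 2 ≤ Module.finrank K W := by
        have h := finrank_inf_ker_ge U0 f
        rw [hW]
        omega
      have hdisj : Submodule.span K {s} ⊓ W = ⊥ := by
        rw [Submodule.eq_bot_iff]
        rintro x ⟨hx1, hx2⟩
        obtain ⟨c, rfl⟩ := Submodule.mem_span_singleton.mp hx1
        by_contra hx0
        have hc : c ≠ 0 := fun h => hx0 (by simp [h])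
        have : s ∈ W := by
          have := W.smul_mem c⁻¹ hx2
          rwa [inv_smul_smul₀ hc] at this
        exact hsU0 (this.1)
      have h := Submodule.finrank_sup_add_finrank_inf_eq (Submodule.span K {s}) W
      rw [hdisj, finrank_span_singleton hs0] at h
      simp only [finrank_bot, add_zero] at h
      omega
  · -- totally isotropic
    intro t ht
    rw [Submodule.mem_sup] at ht
    obtain ⟨a, ha, u, hu, rfl⟩ := ht
    obtain ⟨c, rfl⟩ := Submodule.mem_span_singleton.mp ha
    obtain ⟨hu1, hu3, hu5⟩ := (hU0_mem u).mp hu.1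
    have hfu : s 1 * u 0 + s 3 * u 2 + s 5 * u 4 = 0 := by
      have h2 : f u = 0 := hu.2
      rwa [hf_apply u] at h2
    have hBsu : kleinB s u = 0 := by
      rw [kleinB_expand, hu1, hu3, hu5]
      linear_combination hfu
    have hQu : kleinQ u = 0 := by
      simp only [kleinQ, hu1, hu3, hu5]; ring
    have : kleinQ (c • s + u) = kleinQ (u + c • s) := by rw [add_comm]
    rw [this, kleinQ_add_smul, hQu, hQs, hBsu]
    ring

/-- If `κ` is a 3-dimensional subspace containing a nonzero isotropic vector, then
there is a nonzero isotropic vector orthogonal to all of `κ`. -/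
lemma exists_perp_isotropic (κ : Submodule K (Fin 6 → K))
    (hκ3 : Module.finrank K κ = 3) (s : Fin 6 → K) (hsκ : s ∈ κ)
    (hs0 : s ≠ 0) (hQs : kleinQ s = 0) :
    ∃ z : Fin 6 → K, z ≠ 0 ∧ kleinQ z = 0 ∧ ∀ x ∈ κ, kleinB z x = 0 := by
  classical
  by_cases hc : ∀ x ∈ κ, kleinB s x = 0
  · exact ⟨s, hs0, hQs, hc⟩
  push_neg at hc
  obtain ⟨q, hqκ, hβ⟩ := hc
  set β := kleinB s q with hβdef
  set q' : Fin 6 → K := q + (-(kleinQ q / β)) • s with hq'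
  have hq'κ : q' ∈ κ := κ.add_mem hqκ (κ.smul_mem _ hsκ)
  have hQq' : kleinQ q' = 0 := by
    rw [hq', kleinQ_add_smul, hQs, ← hβdef]
    field_simp
    ring
  have hβ' : kleinB q' s ≠ 0 := by
    rw [hq', kleinB_add_smul_left, kleinB_self, hQs, kleinB_symm]
    simpa using hβ
  -- the perp of κ, via a basis of κ
  set b := Module.finBasisOfFinrankEq K κ hκ3 with hb
  set M : Submodule K (Fin 6 → K) :=
    LinearMap.ker (kBL (b 0 : Fin 6 → K)) ⊓ LinearMap.ker (kBL (b 1 : Fin 6 → K)) ⊓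
      LinearMap.ker (kBL (b 2 : Fin 6 → K)) with hM
  have hMrank : 3 ≤ Module.finrank K M := by
    have h1 := finrank_ker_ge (kBL (b 0 : Fin 6 → K))
    have h2 := finrank_inf_ker_ge (K := K) (LinearMap.ker (kBL (b 0 : Fin 6 → K)))
      (kBL (b 1 : Fin 6 → K))
    have h3 := finrank_inf_ker_ge (K := K)
      (LinearMap.ker (kBL (b 0 : Fin 6 → K)) ⊓ LinearMap.ker (kBL (b 1 : Fin 6 → K)))
      (kBL (b 2 : Fin 6 → K))
    rw [hM]
    omega
  have hMperp : ∀ z ∈ M, ∀ u ∈ κ, kleinB u z = 0 := by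
    intro z hz u hu
    rw [kleinB_symm]
    have hκspan : κ ≤ LinearMap.ker (kBL z) := by
      have hspan : κ = Submodule.span K (Set.range fun i => ((b i : Fin 6 → K))) := by
        conv_lhs => rw [← Submodule.map_subtype_top κ]
        rw [← b.span_eq, Submodule.map_span, ← Set.range_comp]
        rfl
      rw [hspan, Submodule.span_le]
      rintro _ ⟨i, rfl⟩
      have hz0 : kleinB (b 0 : Fin 6 → K) z = 0 := hz.1.1
      have hz1 : kleinB (b 1 : Fin 6 → K) z = 0 := hz.1.2
      have hz2 : kleinB (b 2 : Fin 6 → K) z = 0 := hz.2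
      simp only [SetLike.mem_coe, LinearMap.mem_ker, kBL_apply]
      fin_cases i
      · rw [kleinB_symm]; exact hz0
      · rw [kleinB_symm]; exact hz1
      · rw [kleinB_symm]; exact hz2
    exact hκspan hu
  -- the totally isotropic subspace through s
  obtain ⟨T, hsT, hTrank, hTiso⟩ := exists_totally_isotropic s hs0 hQs
  set T₂ : Submodule K (Fin 6 → K) := T ⊓ LinearMap.ker (kBL q') with hT2
  set N : Submodule K (Fin 6 → K) :=
    LinearMap.ker (kBL s) ⊓ LinearMap.ker (kBL q') with hN
  have hT2rank : 2 ≤ Module.finrank K T₂ := by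
    have h := finrank_inf_ker_ge T (kBL q')
    rw [hT2]; omega
  have hT2N : T₂ ≤ N := by
    rintro t ⟨htT, htq⟩
    have h1 : kleinB s t = 0 := by
      rw [kleinB, hTiso (s + t) (T.add_mem hsT htT), hTiso t htT, hQs]
      ring
    exact ⟨h1, htq⟩
  have hMN : M ≤ N := by
    intro z hz
    exact ⟨hMperp z hz s hsκ, hMperp z hz q' hq'κ⟩
  have hNrank : Module.finrank K N ≤ 4 := by
    have hskers : s ∈ LinearMap.ker (kBL s) := by
      have : kleinB s s = 0 := by rw [kleinB_self, hQs]; ring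
      exact this
    have hsN : s ∉ N := by
      rintro ⟨-, h⟩
      exact hβ' h
    have hlt : N < LinearMap.ker (kBL s) :=
      lt_of_le_of_ne inf_le_left (fun h => hsN (h ▸ hskers))
    have h1 : Module.finrank K N < Module.finrank K (LinearMap.ker (kBL s)) :=
      Submodule.finrank_lt_finrank_of_lt hlt
    have h2 : Module.finrank K (LinearMap.ker (kBL s)) < 6 := by
      have hne : LinearMap.ker (kBL s) ≠ ⊤ := by
        intro h
        have hq2 : q ∈ LinearMap.ker (kBL s) := h ▸ Submodule.mem_top
        exact hβ hq2
      have := Submodule.finrank_lt (K := K) hne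
      rwa [finrank_V6] at this
    omega
  have hfin : 1 ≤ Module.finrank K (T₂ ⊓ M : Submodule K (Fin 6 → K)) := by
    have h := finrank_inf_ge T₂ M N hT2N hMN
    omega
  have hbot : (T₂ ⊓ M : Submodule K (Fin 6 → K)) ≠ ⊥ := by
    intro h
    rw [h] at hfin
    simp at hfin
  obtain ⟨z, hzmem, hz0⟩ := Submodule.exists_mem_ne_zero_of_ne_bot hbot
  refine ⟨z, hz0, hTiso z hzmem.1.1, fun x hx => ?_⟩
  rw [kleinB_symm]
  exact hMperp z hzmem.2 x hx

end KleinAux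

/-- Lemma 4.6.
The plane spanned by two distinct coplanar lines of an hfd line set is external to
the Klein quadric. -/
theorem plane_of_two_lines_external {K : Type*} [Field K]
    (H : Set (Submodule K (Fin 6 → K))) (hH : IsHfd H)
    (G₁ G₂ : Submodule K (Fin 6 → K)) (h1 : G₁ ∈ H) (h2 : G₂ ∈ H)
    (hne : G₁ ≠ G₂) (hcop : Module.finrank K (G₁ ⊔ G₂ : Submodule K (Fin 6 → K)) = 3) :
    IsExternal (G₁ ⊔ G₂) := by
  intro s hs hs0
  intro hQs
  obtain ⟨z, hz0, hQz, hperp⟩ := exists_perp_isotropic (G₁ ⊔ G₂) hcop s hs hs0 hQs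
  have htan : IsTangentHyperplane (kleinPolar (Submodule.span K {z})) := ⟨z, hz0, hQz, rfl⟩
  obtain ⟨G, hG, huniq⟩ := hH.2 _ htan
  have key : ∀ Gi : Submodule K (Fin 6 → K), Gi ≤ G₁ ⊔ G₂ →
      Gi ≤ kleinPolar (Submodule.span K {z}) := by
    intro Gi hle g hg
    rw [mem_kleinPolar]
    intro w hw
    obtain ⟨c, rfl⟩ := Submodule.mem_span_singleton.mp hw
    rw [kleinB_smul_left, hperp g (hle hg)]
    ring
  have e1 := huniq G₁ ⟨h1, key G₁ le_sup_left⟩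
  have e2 := huniq G₂ ⟨h2, key G₂ le_sup_right⟩
  exact hne (e1.trans e2.symm)
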